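/- Let 0<δ<1 and δ'>1 with δ'(1-δ)<1, and set k_n = ⌊n^{δ'}⌋. Then there exists M ≥ 1 such that the interval [M,∞) is contained in the union over n ≥ 1 of the intervals [k_n - k_n^δ, k_n + k_n^δ]. -/

import Mathlib

open Filter

/-- For `0<δ<1`, `δ'>1` with `δ'*(1-δ)<1` and `k n = ⌊n^δ'⌋`, there is `M ≥ 1`
such that `[M,∞) ⊆ ⋃_{n ≥ 1} [k n - (k n)^δ, k n + (k n)^δ]`. -/

lemma mvt_rpow (p : ℝ) (hp : 1 ≤ p) (a : ℝ) (ha : 0 ≤ a) :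
    (a + 1) ^ p - a ^ p ≤ p * (a + 1) ^ (p - 1) := by
  obtain ⟨c, hc, hceq⟩ := exists_hasDerivAt_eq_slope (fun x : ℝ => x ^ p)
    (fun x : ℝ => p * x ^ (p - 1)) (lt_add_one a)
    (fun x _ => (Real.hasDerivAt_rpow_const (Or.inr hp)).continuousAt.continuousWithinAt)
    (fun x _ => Real.hasDerivAt_rpow_const (Or.inr hp))
  have hcb : c ≤ a + 1 := hc.2.le
  have hc0 : 0 ≤ c := le_trans ha hc.1.le
  have : (a + 1) ^ p - a ^ p = p * c ^ (p - 1) := by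
    rw [hceq]; ring
  rw [this]
  have := Real.rpow_le_rpow hc0 hcb (by linarith : (0:ℝ) ≤ p - 1)
  nlinarith [this, (by linarith : (0:ℝ) < p)]

lemma ev_ineq (C D a b : ℝ) (hD : 0 < D) (hb : 0 < b) (hab : b < a) :
    ∀ᶠ x : ℝ in atTop, C * x ^ b + 1 ≤ D * x ^ a := by
  have h1 : Tendsto (fun x : ℝ => D * x ^ (a - b) - C) atTop atTop :=
    tendsto_atTop_add_const_right _ (-C)
      (((tendsto_rpow_atTop (by linarith)).const_mul_atTop hD))
  have h2 : Tendsto (fun x : ℝ => x ^ b * (D * x ^ (a - b) - C) - 1) atTop atTop :=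
    tendsto_atTop_add_const_right _ (-1)
      ((tendsto_rpow_atTop hb).atTop_mul_atTop₀ h1)
  have h3 : ∀ᶠ x : ℝ in atTop, x ^ b * (D * x ^ (a - b) - C) - 1 =
      D * x ^ a - C * x ^ b - 1 := by
    filter_upwards [eventually_gt_atTop (0:ℝ)] with x hx
    have : x ^ b * x ^ (a - b) = x ^ a := by
      rw [← Real.rpow_add hx]; ring_nf
    nlinarith [this]
  have := (h2.congr' h3).eventually_ge_atTop 0
  filter_upwards [this] with x hx
  linarith

theorem stmt_0 (δ δ' : ℝ) (hδ0 : 0 < δ) (hδ1 : δ < 1) (hδ' : 1 < δ')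
    (h : δ' * (1 - δ) < 1) (k : ℕ → ℝ) (hk : ∀ n : ℕ, k n = ⌊(n : ℝ) ^ δ'⌋) :
    ∃ M : ℝ, 1 ≤ M ∧
      Set.Ici M ⊆ ⋃ n : ℕ, ⋃ _ : 1 ≤ n, Set.Icc (k n - (k n) ^ δ) (k n + (k n) ^ δ) := by
  have hδ'0 : (0:ℝ) < δ' := by linarith
  have hδ'ne : δ' ≠ 0 := hδ'0.ne'
  set b := δ' - 1 with hbdef
  set a := δ' * δ with hadef
  have hb : 0 < b := by simp [hbdef]; linarith
  have hab : b < a := by simp [hbdef, hadef]; nlinarith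
  set C := δ' * 2 ^ b with hCdef
  set D := (2:ℝ) ^ (-δ) with hDdef
  have hD : 0 < D := Real.rpow_pos_of_pos (by norm_num) _
  -- eventual facts at real arguments
  have hev : ∀ᶠ x : ℝ in atTop,
      (2 ≤ x ^ δ' ∧ C * x ^ b + 1 ≤ D * x ^ a) ∧ 1 ≤ x := by
    filter_upwards [(tendsto_rpow_atTop hδ'0).eventually_ge_atTop 2,
      ev_ineq C D a b hD hb hab, eventually_ge_atTop (1:ℝ)] with x h1 h2 h3
    exact ⟨⟨h1, h2⟩, h3⟩
  have hevn : ∀ᶠ n : ℕ in atTop,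
      (2 ≤ (n:ℝ) ^ δ' ∧ C * (n:ℝ) ^ b + 1 ≤ D * (n:ℝ) ^ a) ∧ 1 ≤ (n:ℝ) :=
    tendsto_natCast_atTop_atTop.eventually hev
  obtain ⟨N, hN⟩ := eventually_atTop.mp hevn
  set N' : ℕ := max N 1 with hN'def
  refine ⟨(N':ℝ) ^ δ', Real.one_le_rpow (by exact_mod_cast Nat.one_le_iff_ne_zero.mpr (by positivity) ) hδ'0.le, ?_⟩
  intro x hx
  simp only [Set.mem_Ici] at hx
  have hN'1 : (1:ℝ) ≤ (N':ℝ) := by exact_mod_cast le_max_right N 1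
  have hM1 : (1:ℝ) ≤ (N':ℝ) ^ δ' := Real.one_le_rpow hN'1 hδ'0.le
  have hx0 : (0:ℝ) < x := by linarith
  set n : ℕ := ⌊x ^ δ'⁻¹⌋₊ with hndef
  -- N' ≤ n
  have hle : (N':ℝ) ≤ x ^ δ'⁻¹ := by
    have := Real.rpow_le_rpow (Real.rpow_nonneg (Nat.cast_nonneg N') δ') hx
      (inv_nonneg.mpr hδ'0.le)
    rwa [Real.rpow_rpow_inv (Nat.cast_nonneg N') hδ'ne] at this
  have hNn : N' ≤ n := Nat.le_floor hle
  have hn1 : 1 ≤ n := le_trans (le_max_right N 1) hNn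
  obtain ⟨⟨h2n, hCn⟩, h1n⟩ := hN n (le_trans (le_max_left N 1) hNn)
  -- n^δ' ≤ x
  have hnx : (n:ℝ) ^ δ' ≤ x := by
    have h1 : (n:ℝ) ≤ x ^ δ'⁻¹ := Nat.floor_le (by positivity)
    have := Real.rpow_le_rpow (Nat.cast_nonneg n) h1 hδ'0.le
    rwa [Real.rpow_inv_rpow hx0.le hδ'ne] at this
  -- x ≤ (n+1)^δ'
  have hxn : x ≤ ((n:ℝ) + 1) ^ δ' := by
    have h1 : x ^ δ'⁻¹ ≤ (n:ℝ) + 1 := (Nat.lt_floor_add_one _).le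
    have := Real.rpow_le_rpow (by positivity) h1 hδ'0.le
    rwa [Real.rpow_inv_rpow hx0.le hδ'ne] at this
  -- bounds on k n
  have hkub : k n ≤ (n:ℝ) ^ δ' := by rw [hk]; exact Int.floor_le _
  have hklb : (n:ℝ) ^ δ' - 1 ≤ k n := by rw [hk]; exact (Int.sub_one_lt_floor _).le
  have hk1 : (1:ℝ) ≤ k n := by linarith
  refine Set.mem_iUnion.2 ⟨n, Set.mem_iUnion.2 ⟨hn1, ?_⟩⟩
  constructor
  · have : (0:ℝ) ≤ (k n) ^ δ := Real.rpow_nonneg (by linarith) δ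
    linarith
  · -- MVT bound
    have hm : ((n:ℝ) + 1) ^ δ' - (n:ℝ) ^ δ' ≤ δ' * ((n:ℝ) + 1) ^ b :=
      mvt_rpow δ' hδ'.le n (Nat.cast_nonneg n)
    have hb2 : ((n:ℝ) + 1) ^ b ≤ (2 * n) ^ b :=
      Real.rpow_le_rpow (by positivity) (by linarith) hb.le
    have hb3 : ((2:ℝ) * n) ^ b = 2 ^ b * (n:ℝ) ^ b :=
      Real.mul_rpow (by norm_num) (Nat.cast_nonneg n)
    -- D * n^a ≤ (n^δ' - 1)^δ
    have h4 : D * (n:ℝ) ^ a ≤ ((n:ℝ) ^ δ' - 1) ^ δ := by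
      have hhalf : (n:ℝ) ^ δ' / 2 ≤ (n:ℝ) ^ δ' - 1 := by linarith
      have h5 : ((n:ℝ) ^ δ' / 2) ^ δ ≤ ((n:ℝ) ^ δ' - 1) ^ δ :=
        Real.rpow_le_rpow (by positivity) hhalf hδ0.le
      have h6 : ((n:ℝ) ^ δ' / 2) ^ δ = D * (n:ℝ) ^ a := by
        rw [Real.div_rpow (Real.rpow_nonneg (Nat.cast_nonneg n) δ') (by norm_num),
          ← Real.rpow_mul (Nat.cast_nonneg n), hDdef, Real.rpow_neg (by norm_num)]
        ring
      linarith
    have h6 : ((n:ℝ) ^ δ' - 1) ^ δ ≤ (k n) ^ δ :=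
      Real.rpow_le_rpow (by linarith) hklb hδ0.le
    have hδ'pos : 0 < δ' := hδ'0
    nlinarith [hm, hb2, hb3, hCn, h4, h6, hklb, hxn,
      Real.rpow_nonneg (Nat.cast_nonneg n) b,
      mul_le_mul_of_nonneg_left hb2 hδ'pos.le]
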